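/- Under the same hypotheses, the SPURS reconstruction error satisfies the bound ‖f − P_A E_{Q,S⊥} f‖² ≤ (sin²(A,S)·sin²(A,Q)/cos²(Q,S)) ‖f‖² for every f ∈ A. -/

import Mathlib

open ContinuousLinearMap

/-- The cosine of the angle between closed subspaces:
`cos(U,V) = inf_{v ∈ U, ‖v‖ = 1} ‖P_V v‖`. -/
noncomputable def cosAngle {H : Type*} [NormedAddCommGroup H] [InnerProductSpace ℂ H]
    (U V : Submodule ℂ H) [Submodule.HasOrthogonalProjection V] : ℝ :=
  sInf {r | ∃ v ∈ U, ‖v‖ = 1 ∧ r = ‖(Submodule.orthogonalProjectionOnto V v : H)‖}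

/-- The sine of the angle between closed subspaces:
`sin(U,V) = sup_{v ∈ U, ‖v‖ = 1} ‖P_{Vᗮ} v‖`. -/
noncomputable def sinAngle {H : Type*} [NormedAddCommGroup H] [InnerProductSpace ℂ H]
    (U V : Submodule ℂ H) [Submodule.HasOrthogonalProjection Vᗮ] : ℝ :=
  sSup {r | ∃ v ∈ U, ‖v‖ = 1 ∧ r = ‖(Submodule.orthogonalProjectionOnto Vᗮ v : H)‖}

section Aux

variable {H : Type*} [NormedAddCommGroup H] [InnerProductSpace ℂ H]

local notation "⟪" x ", " y "⟫" => @inner ℂ _ _ x y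

lemma norm_proj_coe_le (K : Submodule ℂ H) [Submodule.HasOrthogonalProjection K] (v : H) :
    ‖(Submodule.orthogonalProjectionOnto K v : H)‖ ≤ ‖v‖ := by
  have h1 : ‖Submodule.orthogonalProjectionOnto K v‖ ≤ ‖Submodule.orthogonalProjectionOnto K‖ * ‖v‖ :=
    (Submodule.orthogonalProjectionOnto K).le_opNorm v
  have h2 : ‖Submodule.orthogonalProjectionOnto K‖ * ‖v‖ ≤ 1 * ‖v‖ :=
    mul_le_mul_of_nonneg_right (Submodule.orthogonalProjectionOnto_norm_le K) (norm_nonneg v)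
  simpa using h1.trans h2

lemma sinAngle_nonneg (U V : Submodule ℂ H) [Submodule.HasOrthogonalProjection Vᗮ] :
    0 ≤ sinAngle U V :=
  Real.sSup_nonneg (by rintro r ⟨w, _, _, rfl⟩; exact norm_nonneg _)

lemma norm_proj_orthogonal_le_sinAngle (U V : Submodule ℂ H) [Submodule.HasOrthogonalProjection Vᗮ]
    {v : H} (hv : v ∈ U) :
    ‖(Submodule.orthogonalProjectionOnto Vᗮ v : H)‖ ≤ sinAngle U V * ‖v‖ := by
  rcases eq_or_ne v 0 with rfl | hv0
  · simp [mul_nonneg (sinAngle_nonneg U V)]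
  · have hnv : 0 < ‖v‖ := norm_pos_iff.2 hv0
    set u : H := (‖v‖⁻¹ : ℂ) • v with hu
    have hu1 : ‖u‖ = 1 := by
      rw [hu, norm_smul]
      simp [hnv.ne']
    have humem : u ∈ U := U.smul_mem _ hv
    have hmem : ‖(Submodule.orthogonalProjectionOnto Vᗮ u : H)‖ ∈
        {r | ∃ w ∈ U, ‖w‖ = 1 ∧ r = ‖(Submodule.orthogonalProjectionOnto Vᗮ w : H)‖} :=
      ⟨u, humem, hu1, rfl⟩
    have hbdd : BddAbove {r | ∃ w ∈ U, ‖w‖ = 1 ∧ r = ‖(Submodule.orthogonalProjectionOnto Vᗮ w : H)‖} := by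
      refine ⟨1, ?_⟩
      rintro r ⟨w, _, hw1, rfl⟩
      calc ‖(Submodule.orthogonalProjectionOnto Vᗮ w : H)‖ ≤ ‖w‖ := norm_proj_coe_le _ _
        _ = 1 := hw1
    have hle : ‖(Submodule.orthogonalProjectionOnto Vᗮ u : H)‖ ≤ sinAngle U V := le_csSup hbdd hmem
    have hval : (Submodule.orthogonalProjectionOnto Vᗮ u : H) =
        (‖v‖⁻¹ : ℂ) • (Submodule.orthogonalProjectionOnto Vᗮ v : H) := by
      rw [hu, ContinuousLinearMap.map_smul, Submodule.coe_smul]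
    have hnval : ‖(Submodule.orthogonalProjectionOnto Vᗮ u : H)‖ =
        ‖v‖⁻¹ * ‖(Submodule.orthogonalProjectionOnto Vᗮ v : H)‖ := by
      rw [hval, norm_smul, norm_inv, Complex.norm_real, Real.norm_of_nonneg (norm_nonneg v)]
    rw [hnval] at hle
    have h2 := mul_le_mul_of_nonneg_left hle hnv.le
    rwa [← mul_assoc, mul_inv_cancel₀ hnv.ne', one_mul, mul_comm ‖v‖] at h2

lemma cosAngle_mul_norm_le (Qs Ss : Submodule ℂ H) [Submodule.HasOrthogonalProjection Ss]
    {v : H} (hv : v ∈ Qs) :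
    cosAngle Qs Ss * ‖v‖ ≤ ‖(Submodule.orthogonalProjectionOnto Ss v : H)‖ := by
  rcases eq_or_ne v 0 with rfl | hv0
  · simp
  · have hnv : 0 < ‖v‖ := norm_pos_iff.2 hv0
    set u : H := (‖v‖⁻¹ : ℂ) • v with hu
    have hu1 : ‖u‖ = 1 := by
      rw [hu, norm_smul]
      simp [hnv.ne']
    have humem : u ∈ Qs := Qs.smul_mem _ hv
    have hmem : ‖(Submodule.orthogonalProjectionOnto Ss u : H)‖ ∈
        {r | ∃ w ∈ Qs, ‖w‖ = 1 ∧ r = ‖(Submodule.orthogonalProjectionOnto Ss w : H)‖} :=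
      ⟨u, humem, hu1, rfl⟩
    have hbdd : BddBelow {r | ∃ w ∈ Qs, ‖w‖ = 1 ∧ r = ‖(Submodule.orthogonalProjectionOnto Ss w : H)‖} := by
      refine ⟨0, ?_⟩
      rintro r ⟨w, _, _, rfl⟩
      exact norm_nonneg _
    have hle : cosAngle Qs Ss ≤ ‖(Submodule.orthogonalProjectionOnto Ss u : H)‖ := csInf_le hbdd hmem
    have hval : (Submodule.orthogonalProjectionOnto Ss u : H) =
        (‖v‖⁻¹ : ℂ) • (Submodule.orthogonalProjectionOnto Ss v : H) := by
      rw [hu, ContinuousLinearMap.map_smul, Submodule.coe_smul]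
    have hnval : ‖(Submodule.orthogonalProjectionOnto Ss u : H)‖ =
        ‖v‖⁻¹ * ‖(Submodule.orthogonalProjectionOnto Ss v : H)‖ := by
      rw [hval, norm_smul, norm_inv, Complex.norm_real, Real.norm_of_nonneg (norm_nonneg v)]
    rw [hnval] at hle
    have h2 := mul_le_mul_of_nonneg_left hle hnv.le
    rwa [← mul_assoc, mul_inv_cancel₀ hnv.ne', one_mul, mul_comm ‖v‖] at h2

lemma cosAngle_le_one_of_pos (Qs Ss : Submodule ℂ H) [Submodule.HasOrthogonalProjection Ss]
    (hcos : 0 < cosAngle Qs Ss) : cosAngle Qs Ss ≤ 1 := by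
  rcases Set.eq_empty_or_nonempty
      {r | ∃ w ∈ Qs, ‖w‖ = 1 ∧ r = ‖(Submodule.orthogonalProjectionOnto Ss w : H)‖} with h | ⟨r, hr⟩
  · exfalso
    rw [cosAngle, h, Real.sInf_empty] at hcos
    exact lt_irrefl 0 hcos
  · have hbdd : BddBelow {r | ∃ w ∈ Qs, ‖w‖ = 1 ∧ r = ‖(Submodule.orthogonalProjectionOnto Ss w : H)‖} := by
      refine ⟨0, ?_⟩
      rintro r ⟨w, _, _, rfl⟩
      exact norm_nonneg _
    have h1 : cosAngle Qs Ss ≤ r := csInf_le hbdd hr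
    obtain ⟨w, _, hw1, rfl⟩ := hr
    calc cosAngle Qs Ss ≤ ‖(Submodule.orthogonalProjectionOnto Ss w : H)‖ := h1
      _ ≤ ‖w‖ := norm_proj_coe_le _ _
      _ = 1 := hw1

/-- Projection onto `A` of a vector orthogonal to `S` is bounded by `sin(A,S)`. -/
lemma norm_proj_le_sinAngle_of_mem_orthogonal (A S : Submodule ℂ H)
    [Submodule.HasOrthogonalProjection A] [Submodule.HasOrthogonalProjection S] {w : H} (hw : w ∈ Sᗮ) :
    ‖(Submodule.orthogonalProjectionOnto A w : H)‖ ≤ sinAngle A S * ‖w‖ := by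
  set a : H := (Submodule.orthogonalProjectionOnto A w : H) with ha_def
  have ha : a ∈ A := (Submodule.orthogonalProjectionOnto A w).2
  have key : ‖a‖ ^ 2 ≤ sinAngle A S * ‖w‖ * ‖a‖ := by
    have e0 : ⟪w - a, a⟫ = 0 := Submodule.starProjection_inner_eq_zero w a ha
    have e1 : ⟪a, a⟫ = ⟪w, a⟫ := by
      rw [inner_sub_left, sub_eq_zero] at e0
      exact e0.symm
    have e2 : ⟪w, (Submodule.orthogonalProjectionOnto S a : H)⟫ = 0 := by
      rw [inner_eq_zero_symm]
      exact hw _ (Submodule.orthogonalProjectionOnto S a).2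
    have e3 : ⟪w, a⟫ = ⟪w, (Submodule.orthogonalProjectionOnto Sᗮ a : H)⟫ := by
      have hsplit : (Submodule.orthogonalProjectionOnto S a : H) + (Submodule.orthogonalProjectionOnto Sᗮ a : H) = a :=
        Submodule.starProjection_add_starProjection_orthogonal (K := S) a
      conv_lhs => rw [← hsplit]
      rw [inner_add_right, e2, zero_add]
    have hsin : ‖(Submodule.orthogonalProjectionOnto Sᗮ a : H)‖ ≤ sinAngle A S * ‖a‖ :=
      norm_proj_orthogonal_le_sinAngle A S ha
    calc ‖a‖ ^ 2 = RCLike.re ⟪a, a⟫ := (inner_self_eq_norm_sq a).symm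
      _ = RCLike.re ⟪w, (Submodule.orthogonalProjectionOnto Sᗮ a : H)⟫ := by rw [e1, e3]
      _ ≤ ‖⟪w, (Submodule.orthogonalProjectionOnto Sᗮ a : H)⟫‖ := RCLike.re_le_norm _
      _ ≤ ‖w‖ * ‖(Submodule.orthogonalProjectionOnto Sᗮ a : H)‖ := norm_inner_le_norm _ _
      _ ≤ ‖w‖ * (sinAngle A S * ‖a‖) :=
          mul_le_mul_of_nonneg_left hsin (norm_nonneg w)
      _ = sinAngle A S * ‖w‖ * ‖a‖ := by ring
  rcases eq_or_lt_of_le (norm_nonneg a) with h | h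
  · rw [← h]
    exact mul_nonneg (sinAngle_nonneg A S) (norm_nonneg w)
  · have : ‖a‖ * ‖a‖ ≤ sinAngle A S * ‖w‖ * ‖a‖ := by nlinarith [key]
    exact le_of_mul_le_mul_right this h

end Aux

set_option maxHeartbeats 1000000

/-- Second SPURS error bound (Proposition 1): for every `f` in the signal
subspace `As`, `‖f − P_A E_{Q,Sᗮ} f‖² ≤ (sin²(A,S)·sin²(A,Q)/cos²(Q,S)) ‖f‖²`. -/
theorem spurs_error_bound_second
    {H L : Type*} [NormedAddCommGroup H] [InnerProductSpace ℂ H] [CompleteSpace H]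
    [NormedAddCommGroup L] [InnerProductSpace ℂ L] [CompleteSpace L]
    (Qop Sop : L →L[ℂ] H) (B : L →L[ℂ] L)
    (hB₁ : B ∘L (adjoint Sop ∘L Qop) = ContinuousLinearMap.id ℂ L)
    (hB₂ : (adjoint Sop ∘L Qop) ∘L B = ContinuousLinearMap.id ℂ L)
    (As Ss Qs : Submodule ℂ H)
    [Submodule.HasOrthogonalProjection As] [Submodule.HasOrthogonalProjection Ss] [Submodule.HasOrthogonalProjection Qs]
    (hQs : LinearMap.range (Qop : L →ₗ[ℂ] H) = Qs) (hSs : LinearMap.range (Sop : L →ₗ[ℂ] H) = Ss)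
    (hcos : 0 < cosAngle Qs Ss)
    (f : H) (hf : f ∈ As) :
    ‖f - ((Submodule.orthogonalProjectionOnto As) ((Qop ∘L B ∘L adjoint Sop) f) : H)‖ ^ 2 ≤
      (sinAngle As Ss ^ 2 * sinAngle As Qs ^ 2 / cosAngle Qs Ss ^ 2) * ‖f‖ ^ 2 := by
  simp only [ContinuousLinearMap.comp_apply]
  set c := cosAngle Qs Ss with hc_def
  set sAS := sinAngle As Ss with hsAS_def
  set sAQ := sinAngle As Qs with hsAQ_def
  set g : H := f - (Submodule.orthogonalProjectionOnto Qs f : H) with hg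
  have hgQ : g ∈ Qsᗮ := Submodule.sub_starProjection_mem_orthogonal (K := Qs) f
  set q : H := Qop (B (adjoint Sop g)) with hqdef
  have hqQ : q ∈ Qs := by
    rw [← hQs]
    exact ⟨B (adjoint Sop g), rfl⟩
  obtain ⟨y, hy⟩ : ∃ y, Qop y = (Submodule.orthogonalProjectionOnto Qs f : H) := by
    have h : ((Submodule.orthogonalProjectionOnto Qs f : H)) ∈ LinearMap.range (Qop : L →ₗ[ℂ] H) :=
      (SetLike.ext_iff.1 hQs _).2 (Submodule.orthogonalProjectionOnto Qs f).2
    exact LinearMap.mem_range.1 h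
  have hB1' : ∀ x : L, B ((adjoint Sop) (Qop x)) = x := by
    intro x
    have h := ContinuousLinearMap.ext_iff.1 hB₁ x
    simpa using h
  have hB2' : ∀ x : L, (adjoint Sop) (Qop (B x)) = x := by
    intro x
    have h := ContinuousLinearMap.ext_iff.1 hB₂ x
    simpa using h
  set w : H := f - Qop (B (adjoint Sop f)) with hw
  have hEf : Qop (B (adjoint Sop f)) = (Submodule.orthogonalProjectionOnto Qs f : H) + q := by
    have hsplit : adjoint Sop f
        = adjoint Sop (Submodule.orthogonalProjectionOnto Qs f : H) + adjoint Sop g := by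
      rw [← map_add]
      congr 1
      rw [hg]
      abel
    rw [hsplit, map_add, map_add, ← hy, hB1', hy, hqdef]
  have hwgq : w = g - q := by
    rw [hw, hEf, hg]
    abel
  have hwS : w ∈ Ssᗮ := by
    have hSw : adjoint Sop w = 0 := by
      rw [hw, map_sub, hB2', sub_self]
    rw [← hSs, Submodule.mem_orthogonal]
    rintro u ⟨y', rfl⟩
    have h := ContinuousLinearMap.adjoint_inner_right Sop y' w
    rw [hSw, inner_zero_right] at h
    exact h.symm
  have hqg : (inner ℂ q g : ℂ) = 0 := (Submodule.mem_orthogonal _ _).1 hgQ q hqQ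
  have hPyth : ‖w‖ ^ 2 = ‖g‖ ^ 2 + ‖q‖ ^ 2 := by
    have hz : (inner ℂ g (-q) : ℂ) = 0 := by
      rw [inner_neg_right, inner_eq_zero_symm.1 hqg, neg_zero]
    have hp := norm_add_sq_eq_norm_sq_add_norm_sq_of_inner_eq_zero g (-q) hz
    rw [hwgq, sub_eq_add_neg, pow_two, pow_two, pow_two, hp, norm_neg]
  have h1 : ‖q‖ ^ 2 ≤ ‖(Submodule.orthogonalProjectionOnto Ssᗮ q : H)‖ * ‖w‖ := by
    have e1 : (inner ℂ q q : ℂ) = -(inner ℂ q w : ℂ) := by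
      have h : (inner ℂ q w : ℂ) = (inner ℂ q g : ℂ) - (inner ℂ q q : ℂ) := by
        rw [hwgq, inner_sub_right]
      rw [h, hqg]
      ring
    have e2 : (inner ℂ q w : ℂ) = inner ℂ ((Submodule.orthogonalProjectionOnto Ssᗮ q : H)) w := by
      have hsplit : (Submodule.orthogonalProjectionOnto Ss q : H) + (Submodule.orthogonalProjectionOnto Ssᗮ q : H) = q :=
        Submodule.starProjection_add_starProjection_orthogonal (K := Ss) q
      conv_lhs => rw [← hsplit]
      rw [inner_add_left]
      have hz : (inner ℂ ((Submodule.orthogonalProjectionOnto Ss q : H)) w : ℂ) = 0 :=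
        (Submodule.mem_orthogonal _ _).1 hwS _ (Submodule.orthogonalProjectionOnto Ss q).2
      rw [hz, zero_add]
    calc ‖q‖ ^ 2 = RCLike.re (inner ℂ q q : ℂ) := (inner_self_eq_norm_sq q).symm
      _ = RCLike.re (-(inner ℂ ((Submodule.orthogonalProjectionOnto Ssᗮ q : H)) w : ℂ)) := by rw [e1, e2]
      _ ≤ ‖-(inner ℂ ((Submodule.orthogonalProjectionOnto Ssᗮ q : H)) w : ℂ)‖ := RCLike.re_le_norm _
      _ = ‖(inner ℂ ((Submodule.orthogonalProjectionOnto Ssᗮ q : H)) w : ℂ)‖ := norm_neg _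
      _ ≤ ‖(Submodule.orthogonalProjectionOnto Ssᗮ q : H)‖ * ‖w‖ := norm_inner_le_norm _ _
  have h2 : ‖q‖ ^ 2 = ‖(Submodule.orthogonalProjectionOnto Ss q : H)‖ ^ 2
      + ‖(Submodule.orthogonalProjectionOnto Ssᗮ q : H)‖ ^ 2 :=
    Submodule.norm_sq_eq_add_norm_sq_projection q Ss
  have h3 : c * ‖q‖ ≤ ‖(Submodule.orthogonalProjectionOnto Ss q : H)‖ := cosAngle_mul_norm_le Qs Ss hqQ
  have hc1 : c ≤ 1 := cosAngle_le_one_of_pos Qs Ss hcos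
  have hkey : c ^ 2 * ‖w‖ ^ 2 ≤ ‖g‖ ^ 2 := by
    by_cases hq0 : ‖q‖ = 0
    · rw [hq0] at hPyth
      have hc2 : c ^ 2 ≤ 1 := by nlinarith [hc1, hcos]
      nlinarith [hc2, hPyth, sq_nonneg ‖w‖]
    · have hq : 0 < ‖q‖ := lt_of_le_of_ne (norm_nonneg q) (Ne.symm hq0)
      have h1sq : ‖q‖ ^ 2 * ‖q‖ ^ 2
          ≤ (‖(Submodule.orthogonalProjectionOnto Ssᗮ q : H)‖ * ‖w‖) ^ 2 := by
        have := mul_self_le_mul_self (by positivity) h1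
        nlinarith [this]
      have h3sq : c ^ 2 * ‖q‖ ^ 2 ≤ ‖(Submodule.orthogonalProjectionOnto Ss q : H)‖ ^ 2 := by
        have := mul_self_le_mul_self (mul_nonneg hcos.le (norm_nonneg q)) h3
        nlinarith [this]
      have h4 : ‖q‖ ^ 2 * (‖q‖ ^ 2 + c ^ 2 * ‖w‖ ^ 2) ≤ ‖q‖ ^ 2 * ‖w‖ ^ 2 := by
        nlinarith [h1sq, mul_le_mul_of_nonneg_right h3sq (sq_nonneg ‖w‖), h2]
      have h5 : ‖q‖ ^ 2 + c ^ 2 * ‖w‖ ^ 2 ≤ ‖w‖ ^ 2 :=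
        le_of_mul_le_mul_left h4 (by positivity)
      linarith [hPyth]
  have hPAf : (Submodule.orthogonalProjectionOnto As f : H) = f := Submodule.starProjection_eq_self_iff.2 hf
  have hdiff : f - (Submodule.orthogonalProjectionOnto As (Qop (B (adjoint Sop f))) : H)
      = (Submodule.orthogonalProjectionOnto As w : H) := by
    rw [hw, map_sub, Submodule.coe_sub, hPAf]
  have hA : ‖(Submodule.orthogonalProjectionOnto As w : H)‖ ≤ sAS * ‖w‖ :=
    norm_proj_le_sinAngle_of_mem_orthogonal As Ss hwS
  have hgproj : (Submodule.orthogonalProjectionOnto Qsᗮ f : H) = g := Submodule.starProjection_orthogonal_val f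
  have hG : ‖g‖ ≤ sAQ * ‖f‖ := by
    rw [← hgproj]
    exact norm_proj_orthogonal_le_sinAngle As Qs hf
  rw [hdiff, div_mul_eq_mul_div, le_div_iff₀ (by positivity : (0:ℝ) < c ^ 2)]
  have hA2 : ‖(Submodule.orthogonalProjectionOnto As w : H)‖ ^ 2 ≤ sAS ^ 2 * ‖w‖ ^ 2 := by
    nlinarith [hA, norm_nonneg ((Submodule.orthogonalProjectionOnto As w : H)),
      mul_nonneg (sinAngle_nonneg As Ss) (norm_nonneg w)]
  have hG2 : ‖g‖ ^ 2 ≤ sAQ ^ 2 * ‖f‖ ^ 2 := by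
    nlinarith [hG, norm_nonneg g, mul_nonneg (sinAngle_nonneg As Qs) (norm_nonneg f)]
  nlinarith [mul_le_mul_of_nonneg_left hkey (sq_nonneg sAS),
    mul_le_mul_of_nonneg_left hG2 (sq_nonneg sAS),
    mul_le_mul_of_nonneg_right hA2 (sq_nonneg c)]
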